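/- For every c > 0, every ū₀ ∈ [0,1] and every u₂ ≥ 0, the function u₁ ↦ −(u₁(1 − μ̄(u₁,u₂)) − u₂ μ̄(u₁,u₂)) − (u₁+1)/(u₂+1) + (c/2)u₁², where μ̄(u₁,u₂) = (u₁ − u₂ + 1 + ū₀)/3, is strictly convex on ℝ (its second derivative equals 2/3 + c > 0), and its unique minimizer over [0,∞) is u₁* = (2u₂ − ū₀u₂ − ū₀ + 5)/(3cu₂ + 3c + 2u₂ + 2), which is strictly positive. -/

import Mathlib

/-- Anticipated cost of major player 1 in the Multi-Leader-Follower setting,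
where the consumers' mean field response is `μ̄(u₁,u₂) = (u₁ - u₂ + 1 + ū₀)/3`. -/
noncomputable def K1 (c ubar₀ u₂ u₁ : ℝ) : ℝ :=
  -(u₁ * (1 - (u₁ - u₂ + 1 + ubar₀) / 3) - u₂ * ((u₁ - u₂ + 1 + ubar₀) / 3)) -
    (u₁ + 1) / (u₂ + 1) + c / 2 * u₁ ^ 2

theorem stmt_14 (c ubar₀ u₂ : ℝ) (hc : 0 < c) (h₀ : ubar₀ ∈ Set.Icc (0 : ℝ) 1)
    (hu₂ : 0 ≤ u₂) :
    StrictConvexOn ℝ Set.univ (K1 c ubar₀ u₂) ∧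
    (∀ x : ℝ, deriv (deriv (K1 c ubar₀ u₂)) x = 2 / 3 + c) ∧
    0 < (2 * u₂ - ubar₀ * u₂ - ubar₀ + 5) / (3 * c * u₂ + 3 * c + 2 * u₂ + 2) ∧
    ∀ u₁ : ℝ, 0 ≤ u₁ →
      u₁ ≠ (2 * u₂ - ubar₀ * u₂ - ubar₀ + 5) / (3 * c * u₂ + 3 * c + 2 * u₂ + 2) →
      K1 c ubar₀ u₂ ((2 * u₂ - ubar₀ * u₂ - ubar₀ + 5) / (3 * c * u₂ + 3 * c + 2 * u₂ + 2))
        < K1 c ubar₀ u₂ u₁ := by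
  obtain ⟨h0, h1⟩ := h₀
  have hv : (0:ℝ) < u₂ + 1 := by linarith
  have hD : (0:ℝ) < 3 * c * u₂ + 3 * c + 2 * u₂ + 2 := by nlinarith
  have hN : (0:ℝ) < 2 * u₂ - ubar₀ * u₂ - ubar₀ + 5 := by nlinarith
  set A : ℝ := c / 2 + 1 / 3 with hA
  have hApos : 0 < A := by positivity
  set B : ℝ := (ubar₀ - 2) / 3 - 1 / (u₂ + 1) with hB
  set C : ℝ := (-u₂ ^ 2 + (1 + ubar₀) * u₂) / 3 - 1 / (u₂ + 1) with hC
  have hK : K1 c ubar₀ u₂ = fun x => A * x ^ 2 + B * x + C := by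
    funext x
    simp only [K1, hA, hB, hC]
    field_simp
    ring
  refine ⟨?_, ?_, by positivity, ?_⟩
  · rw [hK]
    refine ⟨convex_univ, ?_⟩
    intro x _ y _ hxy a b ha hb hab
    simp only [smul_eq_mul]
    have hx2 : 0 < (x - y) ^ 2 :=
      lt_of_le_of_ne (sq_nonneg _) (Ne.symm (pow_ne_zero 2 (sub_ne_zero.mpr hxy)))
    have hb' : b = 1 - a := by linarith
    subst hb'
    nlinarith [mul_pos (mul_pos hApos (mul_pos ha hb)) hx2]
  · have hd1 : deriv (K1 c ubar₀ u₂) = fun x => 2 * A * x + B := by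
      funext x
      rw [hK]
      have : HasDerivAt (fun x : ℝ => A * x ^ 2 + B * x + C) (2 * A * x + B) x := by
        have := (((hasDerivAt_pow 2 x).const_mul A).add ((hasDerivAt_id x).const_mul B)).add_const C
        refine this.congr_deriv ?_
        norm_num
        ring
      exact this.deriv
    intro x
    rw [hd1]
    have : HasDerivAt (fun x : ℝ => 2 * A * x + B) (2 * A) x := by
      simpa using ((hasDerivAt_id x).const_mul (2 * A)).add_const B
    rw [this.deriv, hA]; ring
  · intro u₁ _ hne
    set u : ℝ := (2 * u₂ - ubar₀ * u₂ - ubar₀ + 5) / (3 * c * u₂ + 3 * c + 2 * u₂ + 2) with hu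
    have hcrit : 2 * A * u + B = 0 := by
      rw [hu, hA, hB]
      field_simp
      ring
    have hsq : 0 < (u₁ - u) ^ 2 :=
      lt_of_le_of_ne (sq_nonneg _) (Ne.symm (pow_ne_zero 2 (sub_ne_zero.mpr hne)))
    have h2 : (2 * A * u + B) * (u₁ - u) = 0 := by rw [hcrit]; ring
    rw [hK]
    simp only
    nlinarith [mul_pos hApos hsq, h2]
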